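/- Let L be an n×n real symmetric matrix with zero row and column sums and nonnegative off-diagonal entries (a Laplacian matrix). Then for any symmetric norm ‖·‖ on ℝⁿ and any x ∈ ℝⁿ with Σ_i x_i = 0, one has ‖L x‖ ≤ n (max_{i≠j} L_{ij}) ‖x‖. -/

import Mathlib

open Finset

/-- A subadditive, absolutely homogeneous function applied to a nonnegative
combination is at most the combination of values. -/
private lemma norm_comb_le {n : ℕ} (N : (Fin n → ℝ) → ℝ)
    (hN_add : ∀ a b, N (a + b) ≤ N a + N b)
    (hN_smul : ∀ (c : ℝ) a, N (c • a) = |c| * N a)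
    {ι : Type*} (s : Finset ι) (w : ι → ℝ) (v : ι → Fin n → ℝ)
    (hw : ∀ i ∈ s, 0 ≤ w i) :
    N (∑ i ∈ s, w i • v i) ≤ ∑ i ∈ s, w i * N (v i) := by
  have hN0 : N 0 = 0 := by simpa using hN_smul 0 0
  induction s using Finset.cons_induction_on with
  | empty => simp [hN0]
  | cons _ _ hx ih =>
      rename_i a s
      rw [Finset.sum_cons, Finset.sum_cons]
      refine le_trans (hN_add _ _) ?_
      have h1 : N (w a • v a) = w a * N (v a) := by
        rw [hN_smul, abs_of_nonneg (hw a (Finset.mem_cons_self a s))]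
      have h2 := ih (fun i hi => hw i (Finset.mem_cons_of_mem hi))
      linarith

/-- Theorem 2: for an `n×n` Laplacian matrix `L` (symmetric, zero row and column
sums, nonnegative off-diagonal entries), any symmetric norm `N` and any vector
`x` with zero coordinate sum, `‖Lx‖ ≤ n (max_{i≠j} L_{ij}) ‖x‖`. -/
theorem laplacian_symmetric_norm_bound {n : ℕ}
    (L : Matrix (Fin n) (Fin n) ℝ)
    (hL_symm : ∀ i j, L i j = L j i)
    (hL_rows : ∀ i, ∑ j, L i j = 0)
    (hL_offdiag : ∀ i j, i ≠ j → 0 ≤ L i j)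
    (N : (Fin n → ℝ) → ℝ)
    (hN_add : ∀ a b, N (a + b) ≤ N a + N b)
    (hN_smul : ∀ (c : ℝ) a, N (c • a) = |c| * N a)
    (hN_def : ∀ a, N a = 0 → a = 0)
    (hN_perm : ∀ (σ : Equiv.Perm (Fin n)) a, N (a ∘ σ) = N a)
    (hN_sign : ∀ (ε a : Fin n → ℝ), (∀ i, ε i = 1 ∨ ε i = -1) →
      N (fun i => ε i * a i) = N a)
    (x : Fin n → ℝ) (hx : ∑ i, x i = 0) :
    N (L.mulVec x) ≤ n * sSup {c : ℝ | ∃ i j, i ≠ j ∧ c = L i j} * N x := by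
  have hN0 : N 0 = 0 := by simpa using hN_smul 0 0
  -- diagonal entries are nonpositive
  have hdiag : ∀ i, L i i ≤ 0 := by
    intro i
    have h := hL_rows i
    rw [← Finset.add_sum_erase _ _ (Finset.mem_univ i)] at h
    have hnn : 0 ≤ ∑ j ∈ Finset.univ.erase i, L i j :=
      Finset.sum_nonneg fun j hj => hL_offdiag i j (Finset.ne_of_mem_erase hj).symm
    linarith
  rcases Nat.lt_or_ge n 2 with hn | hn
  · -- degenerate cases `n = 0`, `n = 1`
    have hsub : ∀ i j : Fin n, i = j := by
      intro i j
      have := i.isLt; have := j.isLt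
      exact Fin.ext (by omega)
    have hSempty : {c : ℝ | ∃ i j, i ≠ j ∧ c = L i j} = ∅ := by
      ext c
      simp only [Set.mem_setOf_eq, Set.mem_empty_iff_false, iff_false]
      rintro ⟨i, j, hij, -⟩
      exact hij (hsub i j)
    have hLx : L.mulVec x = 0 := by
      funext i
      have huniv : (Finset.univ : Finset (Fin n)) = {i} := by
        ext j; simp [hsub j i]
      have hLii : L i i = 0 := by
        have h := hL_rows i
        rw [huniv, Finset.sum_singleton] at h
        exact h
      show ∑ j, L i j * x j = 0
      rw [huniv, Finset.sum_singleton, hLii, zero_mul]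
    rw [hLx, hN0, hSempty, Real.sSup_empty]
    simp
  · -- main case: `n ≥ 2`
    set S : Set ℝ := {c : ℝ | ∃ i j, i ≠ j ∧ c = L i j} with hSdef
    have hSfin : S.Finite := by
      have hsubs : S ⊆ Set.range (fun p : Fin n × Fin n => L p.1 p.2) := by
        rintro c ⟨i, j, -, rfl⟩; exact ⟨(i, j), rfl⟩
      exact (Set.finite_range _).subset hsubs
    have hbdd : BddAbove S := hSfin.bddAbove
    set M : ℝ := sSup S with hMdef
    have hMub : ∀ i j, i ≠ j → L i j ≤ M := fun i j h => le_csSup hbdd ⟨i, j, h, rfl⟩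
    have hne : (⟨0, by omega⟩ : Fin n) ≠ (⟨1, by omega⟩ : Fin n) := by
      simp [Fin.ext_iff]
    have hM0 : 0 ≤ M := le_trans (hL_offdiag _ _ hne) (hMub _ _ hne)
    have hNx : 0 ≤ N x := by
      have h := hN_add x (-x)
      have hneg : N (-x) = N x := by
        have h' := hN_smul (-1) x
        simpa using h'
      rw [add_neg_cancel, hN0] at h
      linarith
    rcases eq_or_lt_of_le hM0 with hM | hMpos
    · -- all entries of `L` vanish
      have hLzero : ∀ i j, L i j = 0 := by
        intro i j
        by_cases hij : i = j
        · subst hij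
          have h := hL_rows i
          rw [← Finset.add_sum_erase _ _ (Finset.mem_univ i)] at h
          have hz : ∀ j ∈ Finset.univ.erase i, L i j = 0 := by
            intro j hj
            have hji : j ≠ i := Finset.ne_of_mem_erase hj
            have h1 := hL_offdiag i j hji.symm
            have h2 := hMub i j hji.symm
            rw [← hM] at h2
            linarith
          rw [Finset.sum_eq_zero hz] at h
          linarith
        · have h1 := hL_offdiag i j hij
          have h2 := hMub i j hij
          rw [← hM] at h2
          linarith
      have hLx : L.mulVec x = 0 := by
        funext i
        show ∑ j, L i j * x j = 0
        simp [hLzero]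
      rw [hLx, hN0, ← hM]
      simp
    · -- the doubly stochastic matrix `D = (1/n) J - L/(nM)`
      have hn0 : (0 : ℝ) < n := by positivity
      have hnM : (0 : ℝ) < (n : ℝ) * M := by positivity
      set D : Matrix (Fin n) (Fin n) ℝ :=
        Matrix.of (fun i j => 1 / (n : ℝ) - L i j / ((n : ℝ) * M)) with hDdef
      have hDmem : D ∈ doublyStochastic ℝ (Fin n) := by
        rw [mem_doublyStochastic_iff_sum]
        refine ⟨?_, ?_, ?_⟩
        · intro i j
          simp only [hDdef, Matrix.of_apply, sub_nonneg]
          rw [div_le_div_iff₀ hnM hn0]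
          by_cases hij : i = j
          · subst hij
            nlinarith [hdiag i]
          · nlinarith [hMub i j hij]
        · intro i
          have hsplit : ∑ j, D i j = (∑ _j : Fin n, 1 / (n:ℝ)) - (∑ j, L i j) / ((n:ℝ) * M) := by
            rw [Finset.sum_div, ← Finset.sum_sub_distrib]
            rfl
          rw [hsplit, hL_rows i]
          simp [Finset.card_univ]
          field_simp
        · intro j
          have hsplit : ∑ i, D i j = (∑ _i : Fin n, 1 / (n:ℝ)) - (∑ i, L j i) / ((n:ℝ) * M) := by
            rw [Finset.sum_div, ← Finset.sum_sub_distrib]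
            exact Finset.sum_congr rfl fun i _ => by simp [hDdef, hL_symm i j]
          rw [hsplit, hL_rows j]
          simp [Finset.card_univ]
          field_simp
      obtain ⟨w, hw0, hw1, hwD⟩ := exists_eq_sum_perm_of_mem_doublyStochastic hDmem
      -- permutation matrices act on vectors by permuting coordinates
      have hperm : ∀ σ : Equiv.Perm (Fin n), (σ.permMatrix ℝ).mulVec x = x ∘ σ := by
        intro σ
        funext i
        show ∑ j, σ.permMatrix ℝ i j * x j = x (σ i)
        simp [Equiv.Perm.permMatrix, PEquiv.toMatrix_apply, Equiv.toPEquiv_apply,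
          Finset.sum_ite_eq]
      -- `D x` is a convex combination of permuted copies of `x`
      have hDx : D.mulVec x = ∑ σ : Equiv.Perm (Fin n), w σ • (x ∘ σ) := by
        have fadd : ∀ A B : Matrix (Fin n) (Fin n) ℝ,
            (A + B).mulVec x = A.mulVec x + B.mulVec x := fun A B => Matrix.add_mulVec A B x
        let f : Matrix (Fin n) (Fin n) ℝ →+ (Fin n → ℝ) :=
          { toFun := fun A => A.mulVec x
            map_zero' := Matrix.zero_mulVec x
            map_add' := fadd }
        calc D.mulVec x = f (∑ σ : Equiv.Perm (Fin n), w σ • σ.permMatrix ℝ) := by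
              rw [hwD]; rfl
          _ = ∑ σ : Equiv.Perm (Fin n), f (w σ • σ.permMatrix ℝ) := map_sum f _ _
          _ = ∑ σ : Equiv.Perm (Fin n), w σ • (x ∘ σ) := by
              refine Finset.sum_congr rfl fun σ _ => ?_
              show (w σ • σ.permMatrix ℝ).mulVec x = w σ • (x ∘ σ)
              rw [Matrix.smul_mulVec, hperm σ]
      -- `L x = -(nM) • D x`
      have hLx : L.mulVec x = (-((n : ℝ) * M)) • D.mulVec x := by
        funext i
        have hDi : D.mulVec x i = -(L.mulVec x i) / ((n:ℝ) * M) := by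
          show ∑ j, (1 / (n : ℝ) - L i j / ((n : ℝ) * M)) * x j = _
          have hterm : ∀ j, (1 / (n : ℝ) - L i j / ((n : ℝ) * M)) * x j
              = x j * (1 / (n:ℝ)) - (L i j * x j) / ((n:ℝ) * M) := by
            intro j
            field_simp
          rw [Finset.sum_congr rfl fun j _ => hterm j, Finset.sum_sub_distrib,
            ← Finset.sum_mul, ← Finset.sum_div, hx]
          show 0 * (1 / (n:ℝ)) - (L.mulVec x i) / ((n:ℝ) * M) = -(L.mulVec x i) / ((n:ℝ) * M)
          ring
        show L.mulVec x i = -((n : ℝ) * M) * D.mulVec x i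
        rw [hDi]
        field_simp
      -- put everything together
      have hfinal : N (L.mulVec x) = ((n:ℝ) * M) * N (D.mulVec x) := by
        rw [hLx, hN_smul]
        rw [abs_neg, abs_of_pos hnM]
      have hDle : N (D.mulVec x) ≤ N x := by
        rw [hDx]
        have hNs : ∀ σ : Equiv.Perm (Fin n), N (x ∘ σ) = N x := fun σ => hN_perm σ x
        have heq : ∑ σ : Equiv.Perm (Fin n), w σ * N (x ∘ σ) = N x := by
          calc ∑ σ : Equiv.Perm (Fin n), w σ * N (x ∘ σ)
              = ∑ σ : Equiv.Perm (Fin n), w σ * N x :=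
                Finset.sum_congr rfl fun σ _ => by rw [hNs σ]
            _ = (∑ σ : Equiv.Perm (Fin n), w σ) * N x := by rw [Finset.sum_mul]
            _ = N x := by rw [hw1, one_mul]
        exact le_trans (norm_comb_le N hN_add hN_smul _ w _ fun σ _ => hw0 σ) heq.le
      calc N (L.mulVec x) = ((n:ℝ) * M) * N (D.mulVec x) := hfinal
        _ ≤ ((n:ℝ) * M) * N x := by
            exact mul_le_mul_of_nonneg_left hDle hnM.le
        _ = (n:ℝ) * M * N x := rfl
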